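/- Let b, c, N be positive integers with c ≥ b, set r = b−1, and let x : ℂ^N → Matrix(r,r,ℂ), U : ℂ^N → Matrix(1,r,ℂ), W : ℂ^N → Matrix(r,c−r,ℂ) be linear (matrices of linear forms) such that U(a)·x(a)^k·W(a) = 0 for all a ∈ ℂ^N and all k ≥ 0. Suppose W(a) is nonzero only in its first row for all a, and W is not identically zero. Then for every a ∈ ℂ^N, the matrix obtained from the b×c block matrix M(a) = [[x(a), W(a)],[U(a), 0]] by deleting its first row has rank at most r−1 = b−2. In particular the space {M(a) : a ∈ ℂ^N} is imprimitive. -/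

import Mathlib

open Matrix

private lemma stmt11_sum_emb {r : ℕ} [NeZero r] (f : (Fin r ⊕ Fin 1) → ℂ)
    (h0 : f (Sum.inl 0) = 0) :
    ∑ i' : ({i : Fin r // (i : ℕ) ≠ 0} ⊕ Fin 1),
      f (Sum.map (Subtype.val : {i : Fin r // (i : ℕ) ≠ 0} → Fin r) (id : Fin 1 → Fin 1) i')
      = ∑ i, f i := by
  rw [Fintype.sum_sum_type, Fintype.sum_sum_type]
  simp only [Sum.map_inl, Sum.map_inr, id_eq]
  have hsub : ∑ i' : {i : Fin r // (i : ℕ) ≠ 0}, f (Sum.inl i'.val)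
      = ∑ i ∈ Finset.univ.filter (fun i : Fin r => (i : ℕ) ≠ 0), f (Sum.inl i) :=
    (Finset.sum_subtype _ (by simp) (fun i => f (Sum.inl i))).symm
  rw [hsub]
  congr 1
  rw [← Finset.sum_filter_add_sum_filter_not Finset.univ
      (fun i : Fin r => (i : ℕ) ≠ 0) (fun i => f (Sum.inl i))]
  have h2 : ∑ i ∈ Finset.univ.filter (fun i : Fin r => ¬ (i : ℕ) ≠ 0),
      f (Sum.inl i) = 0 := by
    apply Finset.sum_eq_zero
    intro i hi
    simp only [Finset.mem_filter, not_not] at hi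
    have : i = 0 := Fin.ext (by simpa using hi.2)
    rw [this]; exact h0
  rw [h2, add_zero]

/-- If `U xᵏ e₀ = 0` for all `k`, there is a nonzero vector `v` with `U v = 0` and
`x v` supported in coordinate `0`.  (Take `v` in the `x`-invariant subspace generated
by `e₀` with `x v ∈ ℂ e₀`.) -/
private lemma stmt11_key {r : ℕ} [NeZero r] (x : Matrix (Fin r) (Fin r) ℂ)
    (U : Matrix (Fin 1) (Fin r) ℂ)
    (h : ∀ k : ℕ, (U * x ^ k) 0 0 = 0) :
    ∃ v : Fin r → ℂ, v ≠ 0 ∧ U *ᵥ v = 0 ∧ ∀ i : Fin r, (i : ℕ) ≠ 0 → (x *ᵥ v) i = 0 := by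
  classical
  set e0 : Fin r → ℂ := Pi.single 0 1 with he0def
  set K : Submodule ℂ (Fin r → ℂ) :=
    Submodule.span ℂ (Set.range fun k : ℕ => x ^ k *ᵥ e0) with hKdef
  have he0K : e0 ∈ K := Submodule.subset_span ⟨0, by simp⟩
  have hxK : ∀ w ∈ K, x *ᵥ w ∈ K := by
    intro w hw
    have hmap : K.map x.mulVecLin ≤ K := by
      rw [hKdef, Submodule.map_span]
      apply Submodule.span_le.mpr
      rintro _ ⟨_, ⟨k, rfl⟩, rfl⟩
      exact Submodule.subset_span ⟨k + 1, by
        simp [Matrix.mulVecLin_apply, Matrix.mulVec_mulVec, pow_succ']⟩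
    exact hmap (Submodule.mem_map_of_mem hw)
  have hUK : ∀ w ∈ K, U *ᵥ w = 0 := by
    intro w hw
    have hle : K ≤ LinearMap.ker U.mulVecLin := by
      apply Submodule.span_le.mpr
      rintro _ ⟨k, rfl⟩
      have hz : U *ᵥ (x ^ k *ᵥ e0) = 0 := by
        rw [Matrix.mulVec_mulVec, he0def, Matrix.mulVec_single]
        funext i
        have : i = 0 := Subsingleton.elim _ _
        rw [this]
        simpa using h k
      simpa [LinearMap.mem_ker, Matrix.mulVecLin_apply] using hz
    simpa [Matrix.mulVecLin_apply] using hle hw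
  set xK : K →ₗ[ℂ] K := x.mulVecLin.restrict (p := K) (q := K)
    (fun w hw => by simpa [Matrix.mulVecLin_apply] using hxK w hw) with hxKdef
  set E : Submodule ℂ K := Submodule.span ℂ {(⟨e0, he0K⟩ : K)} with hEdef
  have hE0 : (⟨e0, he0K⟩ : K) ≠ 0 := by
    intro hcon
    have h1 : e0 = 0 := congrArg Subtype.val hcon
    have h2 := congrFun h1 0
    simp [he0def] at h2
  have hEpos : 0 < Module.finrank ℂ E := by
    refine (Module.finrank_pos_iff_exists_ne_zero (R := ℂ) (M := E)).mpr ?_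
    exact ⟨⟨_, Submodule.mem_span_singleton_self _⟩,
      fun hcon => hE0 (by simpa [Subtype.ext_iff] using hcon)⟩
  have hq : Module.finrank ℂ (K ⧸ E) < Module.finrank ℂ K := by
    have := E.finrank_quotient_add_finrank
    omega
  set f : K →ₗ[ℂ] K ⧸ E := E.mkQ ∘ₗ xK with hfdef
  have hninj : LinearMap.ker f ≠ ⊥ := by
    intro hbot
    have hinj : Function.Injective f := LinearMap.ker_eq_bot.mp hbot
    exact absurd (LinearMap.finrank_le_finrank_of_injective hinj) (by omega)
  obtain ⟨m, hmker, hmne⟩ := (Submodule.ne_bot_iff _).mp hninj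
  have hmE : xK m ∈ E := by
    rw [LinearMap.mem_ker, hfdef, LinearMap.comp_apply, Submodule.mkQ_apply,
      Submodule.Quotient.mk_eq_zero] at hmker
    exact hmker
  obtain ⟨cc, hcc⟩ := Submodule.mem_span_singleton.mp hmE
  have hx : x *ᵥ (m : Fin r → ℂ) = cc • e0 := by
    have h1 : ((xK m : K) : Fin r → ℂ) = x *ᵥ (m : Fin r → ℂ) := by
      simp [hxKdef, LinearMap.restrict_apply, Matrix.mulVecLin_apply]
    rw [← h1, ← hcc]
    rfl
  refine ⟨(m : Fin r → ℂ), fun hcon => hmne (Subtype.ext hcon), hUK _ m.2, ?_⟩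
  intro i hi
  have hine : i ≠ 0 := fun hcon => hi (by simp [hcon])
  rw [hx]
  simp [he0def, Pi.single_eq_of_ne hine]

/-- Proposition 5.5 of the paper (the `d_W = 1` case, `W` supported in one row).
Let `r = b−1` and let `x, U, W` be matrices of linear forms on `ℂ^N` (of sizes
`r×r`, `1×r`, `r×(c−r)`) with `U(a)·x(a)^k·W(a) = 0` for all `a` and `k`.
If `W(a)` is nonzero only in its first row for every `a`, and `W` is not
identically zero, then deleting the first row of the block matrix
`M(a) = [[x(a), W(a)], [U(a), 0]]` yields a matrix of rank at most `b−2`, for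
every `a`.  In particular the space `{M(a) : a ∈ ℂ^N}` is imprimitive. -/
theorem stmt11 (b c N : ℕ) (hb : 0 < b) (hc : 0 < c) (hN : 0 < N) (hbc : b ≤ c)
    (x : (Fin N → ℂ) →ₗ[ℂ] Matrix (Fin (b - 1)) (Fin (b - 1)) ℂ)
    (U : (Fin N → ℂ) →ₗ[ℂ] Matrix (Fin 1) (Fin (b - 1)) ℂ)
    (W : (Fin N → ℂ) →ₗ[ℂ] Matrix (Fin (b - 1)) (Fin (c - (b - 1))) ℂ)
    (hUxW : ∀ (a : Fin N → ℂ) (k : ℕ), U a * (x a) ^ k * W a = 0)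
    (hWrow : ∀ (a : Fin N → ℂ) (i : Fin (b - 1)) (j : Fin (c - (b - 1))),
      (i : ℕ) ≠ 0 → W a i j = 0)
    (hWne : W ≠ 0) :
    (∀ a : Fin N → ℂ,
      ((Matrix.fromBlocks (x a) (W a) (U a) 0).submatrix
        (Sum.map (Subtype.val : {i : Fin (b - 1) // (i : ℕ) ≠ 0} → Fin (b - 1))
          (id : Fin 1 → Fin 1)) id).rank ≤ b - 2) ∧
    (∃ H' : Submodule ℂ (Fin (b - 1) ⊕ Fin 1 → ℂ),
      Module.finrank ℂ H' = b - 1 ∧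
      ∀ a : Fin N → ℂ,
        Module.finrank ℂ
          (H'.map ((Matrix.fromBlocks (x a) (W a) (U a) 0).transpose.mulVecLin)) ≤ b - 2) := by
  classical
  -- necessarily `b ≥ 2`, else `W = 0`
  have hb2 : 2 ≤ b := by
    by_contra hlt
    push_neg at hlt
    apply hWne
    apply LinearMap.ext
    intro a
    funext i j
    exact absurd i.isLt (by omega)
  haveI : NeZero (b - 1) := ⟨by omega⟩
  -- a nonzero entry of `W`, necessarily in row `0`
  have hex : ∃ (a₀ : Fin N → ℂ) (j₀ : Fin (c - (b - 1))), W a₀ 0 j₀ ≠ 0 := by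
    by_contra hcon
    push_neg at hcon
    apply hWne
    apply LinearMap.ext
    intro a
    funext i j
    by_cases hi : (i : ℕ) = 0
    · have : i = 0 := Fin.ext (by simpa using hi)
      rw [this]; simpa using hcon a j
    · simpa using hWrow a i j hi
  obtain ⟨a₀, j₀, hβ⟩ := hex
  -- basic consequence of `hUxW` and `hWrow`
  have fact1 : ∀ (a : Fin N → ℂ) (k : ℕ) (j : Fin (c - (b - 1))),
      (U a * (x a) ^ k) 0 0 * W a 0 j = 0 := by
    intro a k j
    have h := congrFun (congrFun (hUxW a k) 0) j
    rw [Matrix.mul_apply] at h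
    have hsingle : ∑ i, (U a * (x a) ^ k) 0 i * W a i j
        = (U a * (x a) ^ k) 0 0 * W a 0 j := by
      apply Finset.sum_eq_single
      · intro i _ hine
        have : (i : ℕ) ≠ 0 := fun hv => hine (Fin.ext (by simpa using hv))
        rw [hWrow a i j this, mul_zero]
      · intro hmem
        exact absurd (Finset.mem_univ _) hmem
    rw [hsingle] at h
    simpa using h
  -- the key vanishing, via a density argument on an affine line
  have h00 : ∀ (a : Fin N → ℂ) (k : ℕ), (U a * (x a) ^ k) 0 0 = 0 := by
    intro a k
    set g : ℂ → ℂ := fun t => (U (a + t • a₀) * (x (a + t • a₀)) ^ k) 0 0 with hgdef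
    have hline : Continuous fun t : ℂ => a + t • a₀ :=
      continuous_const.add (continuous_id.smul continuous_const)
    have hgc : Continuous g := by
      have hUc : Continuous fun t : ℂ => U (a + t • a₀) :=
        U.continuous_of_finiteDimensional.comp hline
      have hxc : Continuous fun t : ℂ => (x (a + t • a₀)) ^ k :=
        (x.continuous_of_finiteDimensional.comp hline).pow k
      exact (hUc.matrix_mul hxc).matrix_elem 0 0
    set t₀ : ℂ := -(W a 0 j₀ / W a₀ 0 j₀) with ht₀def
    have hlin : ∀ t : ℂ, W (a + t • a₀) 0 j₀ = W a 0 j₀ + t * W a₀ 0 j₀ := by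
      intro t
      rw [map_add, LinearMap.map_smul]
      simp [smul_eq_mul]
    have hEq : Set.EqOn g (fun _ => (0 : ℂ)) ({t₀}ᶜ : Set ℂ) := by
      intro t ht
      have hne : W (a + t • a₀) 0 j₀ ≠ 0 := by
        rw [hlin]
        intro hcon
        apply ht
        show t = t₀
        rw [ht₀def]
        field_simp
        linear_combination hcon
      exact (mul_eq_zero.mp (fact1 (a + t • a₀) k j₀)).resolve_right hne
    have hg0 : g = fun _ => (0 : ℂ) :=
      Continuous.ext_on (dense_compl_singleton t₀) hgc continuous_const hEq
    have := congrFun hg0 0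
    simpa [hgdef] using this
  -- part 1: the rank bound for the matrix with first row deleted
  have hrank : ∀ a : Fin N → ℂ,
      ((Matrix.fromBlocks (x a) (W a) (U a) 0).submatrix
        (Sum.map (Subtype.val : {i : Fin (b - 1) // (i : ℕ) ≠ 0} → Fin (b - 1))
          (id : Fin 1 → Fin 1)) id).rank ≤ b - 2 := by
    intro a
    obtain ⟨v, hvne, hUv, hxv⟩ := stmt11_key (x a) (U a) (h00 a)
    set M := Matrix.fromBlocks (x a) (W a) (U a) 0 with hMdef
    set emb := (Sum.map (Subtype.val : {i : Fin (b - 1) // (i : ℕ) ≠ 0} → Fin (b - 1))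
          (id : Fin 1 → Fin 1)) with hembdef
    set S := M.submatrix emb id with hSdef
    set S₁ := M.submatrix emb Sum.inl with hS₁def
    have hScol : ∀ i j', M (emb i) (Sum.inr j') = 0 := by
      rintro (⟨i', hi'⟩ | i') j'
      · simpa [hMdef, hembdef] using hWrow a i' j' hi'
      · simp [hMdef, hembdef]
    have hrange : LinearMap.range S.mulVecLin ≤ LinearMap.range S₁.mulVecLin := by
      rintro _ ⟨w, rfl⟩
      refine ⟨w ∘ Sum.inl, ?_⟩
      funext i
      simp only [Matrix.mulVecLin_apply, Matrix.mulVec, dotProduct, Function.comp_apply]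
      rw [Fintype.sum_sum_type]
      simp [hScol, hS₁def, hSdef]
    have hker : v ∈ LinearMap.ker S₁.mulVecLin := by
      rw [LinearMap.mem_ker]
      funext i
      match i with
      | Sum.inl i' =>
        have := hxv i'.1 i'.2
        simpa [hS₁def, hMdef, hembdef, Matrix.mulVecLin_apply, Matrix.mulVec,
          dotProduct] using this
      | Sum.inr i' =>
        have := congrFun hUv i'
        simpa [hS₁def, hMdef, hembdef, Matrix.mulVecLin_apply, Matrix.mulVec,
          dotProduct] using this
    have h1 : S.rank ≤ S₁.rank := by
      rw [Matrix.rank, Matrix.rank]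
      exact Submodule.finrank_mono hrange
    have h2 : S₁.rank + Module.finrank ℂ (LinearMap.ker S₁.mulVecLin) = b - 1 := by
      rw [Matrix.rank, LinearMap.finrank_range_add_finrank_ker]
      simp [Module.finrank_pi]
    have h3 : 0 < Module.finrank ℂ (LinearMap.ker S₁.mulVecLin) := by
      rw [Module.finrank_pos_iff_exists_ne_zero]
      exact ⟨⟨v, hker⟩, fun hcon => hvne (by simpa [Subtype.ext_iff] using hcon)⟩
    omega
  refine ⟨hrank, ?_⟩
  -- part 2: the hyperplane `H' = \{v : v (inl 0) = 0\}`
  set π : ((Fin (b - 1) ⊕ Fin 1) → ℂ) →ₗ[ℂ] ℂ := LinearMap.proj (Sum.inl 0) with hπdef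
  refine ⟨LinearMap.ker π, ?_, ?_⟩
  · have hsurj : LinearMap.range π = ⊤ := by
      rw [LinearMap.range_eq_top]
      intro t
      exact ⟨Pi.single (Sum.inl 0) t, by simp [hπdef]⟩
    have hadd := LinearMap.finrank_range_add_finrank_ker π
    rw [hsurj, finrank_top] at hadd
    have hdom : Module.finrank ℂ ((Fin (b - 1) ⊕ Fin 1) → ℂ) = b := by
      rw [Module.finrank_pi]
      simp
      omega
    rw [hdom] at hadd
    have h1 : Module.finrank ℂ ℂ = 1 := Module.finrank_self ℂ
    omega
  · intro a
    set M := Matrix.fromBlocks (x a) (W a) (U a) 0 with hMdef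
    set emb := (Sum.map (Subtype.val : {i : Fin (b - 1) // (i : ℕ) ≠ 0} → Fin (b - 1))
          (id : Fin 1 → Fin 1)) with hembdef
    set S := M.submatrix emb id with hSdef
    have hle : (LinearMap.ker π).map Mᵀ.mulVecLin ≤ LinearMap.range Sᵀ.mulVecLin := by
      rintro _ ⟨v, hv, rfl⟩
      refine ⟨v ∘ emb, ?_⟩
      funext cidx
      have hv0 : v (Sum.inl 0) = 0 := hv
      simp only [Matrix.mulVecLin_apply, Matrix.mulVec, dotProduct, Function.comp_apply,
        Matrix.transpose_apply, hSdef, Matrix.submatrix_apply, id_eq]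
      exact stmt11_sum_emb (fun i => M i cidx * v i) (by simp [hv0])
    calc Module.finrank ℂ ((LinearMap.ker π).map Mᵀ.mulVecLin)
        ≤ Module.finrank ℂ (LinearMap.range Sᵀ.mulVecLin) := Submodule.finrank_mono hle
      _ = Sᵀ.rank := rfl
      _ = S.rank := Matrix.rank_transpose S
      _ ≤ b - 2 := hrank a
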